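/- Let σ ∈ (0,1), α ∈ [0, 2σ), and g : ℝ → ℝ measurable with |g(x₁)| ≤ |x₁|^α for all x₁. Then the Poisson-kernel integral u(x₁) = c_σ ∫₁^∞ ((1−|x₁−1|²)/(y²−1))^σ · g(y)/|x₁−1−y| dy, for x₁ ∈ (0,1), satisfies u(x₁) = x₁^σ · w(x₁) where w(x₁) = c_σ ∫₁^∞ ((2−x₁)/(y²−1))^σ · g(y)/(1+y−x₁) dy is well defined (the integral converges absolutely) and bounded for x₁ in compact subsets of [0,1). -/

import Mathlib

open MeasureTheory

lemma aux_int {σ α : ℝ} (hσ0 : 0 < σ) (hσ1 : σ < 1) (hα0 : 0 ≤ α) (hα : α < 2 * σ) :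
    IntegrableOn (fun y : ℝ => (y ^ 2 - 1) ^ (-σ) * y ^ (α - 1)) (Set.Ioi (1:ℝ)) := by
  have hmeas : Measurable (fun y : ℝ => (y ^ 2 - 1) ^ (-σ) * y ^ (α - 1)) := by
    fun_prop
  have h12 : IntegrableOn (fun y : ℝ => (y ^ 2 - 1) ^ (-σ) * y ^ (α - 1)) (Set.Ioc 1 2) := by
    have h0 : IntervalIntegrable (fun x : ℝ => x ^ (-σ)) volume 0 1 :=
      intervalIntegral.intervalIntegrable_rpow' (by linarith)
    have h2 : IntervalIntegrable (fun x : ℝ => (x - 1) ^ (-σ)) volume 1 2 := by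
      have := h0.comp_sub_right 1
      norm_num at this
      exact this
    have h3 : IntegrableOn (fun x : ℝ => (x - 1) ^ (-σ)) (Set.Ioc 1 2) :=
      (intervalIntegrable_iff_integrableOn_Ioc_of_le (by norm_num)).1 h2
    refine Integrable.mono' (h3.const_mul 4) (hmeas.aestronglyMeasurable.restrict) ?_
    rw [ae_restrict_iff' measurableSet_Ioc]
    filter_upwards with y hy
    have hy1 : 1 < y := hy.1
    have hy2 : y ≤ 2 := hy.2
    have hy0 : 0 < y := by linarith
    have hden : 0 < y ^ 2 - 1 := by nlinarith
    have habs : |(y ^ 2 - 1) ^ (-σ) * y ^ (α - 1)| = (y ^ 2 - 1) ^ (-σ) * y ^ (α - 1) := by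
      apply abs_of_nonneg; positivity
    have e : y ^ 2 - 1 = (y - 1) * (y + 1) := by ring
    rw [Real.norm_eq_abs, habs, e, Real.mul_rpow (by linarith) (by linarith)]
    have h4 : (y + 1) ^ (-σ) ≤ 1 :=
      Real.rpow_le_one_of_one_le_of_nonpos (by linarith) (by linarith)
    have h5 : y ^ (α - 1) ≤ 4 := by
      have a1 : y ^ (α - 1) ≤ y ^ α :=
        Real.rpow_le_rpow_of_exponent_le (by linarith) (by linarith)
      have a2 : y ^ α ≤ 2 ^ α := Real.rpow_le_rpow (by linarith) hy2 hα0
      have a3 : (2:ℝ) ^ α ≤ 2 ^ (2:ℝ) :=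
        Real.rpow_le_rpow_of_exponent_le (by norm_num) (by linarith)
      have a4 : (2:ℝ) ^ (2:ℝ) = 4 := by
        rw [show (2:ℝ) = ((2:ℕ):ℝ) from by norm_num, Real.rpow_natCast]; norm_num
      linarith
    have hge : 0 ≤ (y - 1) ^ (-σ) := Real.rpow_nonneg (by linarith) _
    have h6 : 0 ≤ y ^ (α - 1) := Real.rpow_nonneg (le_of_lt hy0) _
    calc (y - 1) ^ (-σ) * (y + 1) ^ (-σ) * y ^ (α - 1)
        ≤ (y - 1) ^ (-σ) * 1 * 4 := by
          apply mul_le_mul (mul_le_mul_of_nonneg_left h4 hge) h5 h6 (by positivity)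
      _ = 4 * (y - 1) ^ (-σ) := by ring
  have h2inf : IntegrableOn (fun y : ℝ => (y ^ 2 - 1) ^ (-σ) * y ^ (α - 1)) (Set.Ioi 2) := by
    have hint : IntegrableOn (fun y : ℝ => (4/3:ℝ) ^ σ * y ^ (α - 1 - 2 * σ)) (Set.Ioi 2) :=
      (integrableOn_Ioi_rpow_of_lt (by linarith) (by norm_num)).const_mul _
    refine Integrable.mono' hint (hmeas.aestronglyMeasurable.restrict) ?_
    rw [ae_restrict_iff' measurableSet_Ioi]
    filter_upwards with y hy
    have hy2 : 2 < y := hy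
    have hy0 : 0 < y := by linarith
    have hden : 0 < y ^ 2 - 1 := by nlinarith
    have habs : |(y ^ 2 - 1) ^ (-σ) * y ^ (α - 1)| = (y ^ 2 - 1) ^ (-σ) * y ^ (α - 1) := by
      apply abs_of_nonneg; positivity
    rw [Real.norm_eq_abs, habs]
    have h2 : ((3/4:ℝ) * y ^ 2) ^ (-σ) = (4/3:ℝ) ^ σ * y ^ (-(2*σ)) := by
      rw [Real.mul_rpow (by norm_num) (by positivity)]
      congr 1
      · rw [show ((3:ℝ)/4) = ((4:ℝ)/3)⁻¹ from by norm_num,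
          Real.inv_rpow (by norm_num), ← Real.rpow_neg (by norm_num), neg_neg]
      · rw [← Real.rpow_natCast y 2, ← Real.rpow_mul (le_of_lt hy0)]
        norm_num
    have h1 : (y ^ 2 - 1) ^ (-σ) ≤ (4/3:ℝ) ^ σ * y ^ (-(2*σ)) := by
      rw [← h2]
      exact Real.rpow_le_rpow_of_nonpos (by positivity) (by nlinarith) (by linarith)
    calc (y ^ 2 - 1) ^ (-σ) * y ^ (α - 1)
        ≤ ((4/3:ℝ) ^ σ * y ^ (-(2*σ))) * y ^ (α - 1) :=
          mul_le_mul_of_nonneg_right h1 (Real.rpow_nonneg (le_of_lt hy0) _)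
      _ = (4/3:ℝ) ^ σ * y ^ (α - 1 - 2 * σ) := by
          rw [mul_assoc, ← Real.rpow_add hy0]; ring_nf
  have : Set.Ioi (1:ℝ) = Set.Ioc 1 2 ∪ Set.Ioi 2 := (Set.Ioc_union_Ioi_eq_Ioi (by norm_num)).symm
  rw [this]
  exact h12.union h2inf

theorem stmt_16 (σ α c : ℝ) (hσ : σ ∈ Set.Ioo (0:ℝ) 1)
    (hα : α ∈ Set.Ico (0:ℝ) (2 * σ))
    (g : ℝ → ℝ) (hg_meas : Measurable g) (hg : ∀ y : ℝ, |g y| ≤ |y| ^ α) :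
    (∀ x₁ ∈ Set.Ico (0:ℝ) 1,
      IntegrableOn
        (fun y : ℝ => ((2 - x₁) / (y ^ 2 - 1)) ^ σ * (g y / (1 + y - x₁)))
        (Set.Ioi 1)) ∧
    (∀ x₁ ∈ Set.Ioo (0:ℝ) 1,
      c * (∫ y in Set.Ioi (1:ℝ),
            ((1 - |x₁ - 1| ^ 2) / (y ^ 2 - 1)) ^ σ * (g y / |x₁ - 1 - y|))
        = x₁ ^ σ * (c * ∫ y in Set.Ioi (1:ℝ),
            ((2 - x₁) / (y ^ 2 - 1)) ^ σ * (g y / (1 + y - x₁)))) ∧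
    (∀ b ∈ Set.Ioo (0:ℝ) 1, ∃ M : ℝ, ∀ x₁ ∈ Set.Icc (0:ℝ) b,
      |c * ∫ y in Set.Ioi (1:ℝ),
          ((2 - x₁) / (y ^ 2 - 1)) ^ σ * (g y / (1 + y - x₁))| ≤ M) := by
  obtain ⟨hσ0, hσ1⟩ := hσ
  obtain ⟨hα0, hα2⟩ := hα
  have key : ∀ x₁ ∈ Set.Ico (0:ℝ) 1, ∀ y ∈ Set.Ioi (1:ℝ),
      |((2 - x₁) / (y ^ 2 - 1)) ^ σ * (g y / (1 + y - x₁))|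
        ≤ 2 ^ σ * ((y ^ 2 - 1) ^ (-σ) * y ^ (α - 1)) := by
    rintro x₁ ⟨hx0, hx1⟩ y hy
    have hy1 : 1 < y := hy
    have hy0 : 0 < y := by linarith
    have hden : 0 < y ^ 2 - 1 := by nlinarith
    have hd2 : 0 < 1 + y - x₁ := by linarith
    rw [abs_mul, abs_of_nonneg (Real.rpow_nonneg (div_nonneg (by linarith) hden.le) σ),
      abs_div, abs_of_pos hd2]
    have hA : ((2 - x₁) / (y ^ 2 - 1)) ^ σ ≤ 2 ^ σ * (y ^ 2 - 1) ^ (-σ) := by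
      have b1 : ((2 - x₁) / (y ^ 2 - 1)) ^ σ ≤ (2 / (y ^ 2 - 1)) ^ σ :=
        Real.rpow_le_rpow (div_nonneg (by linarith) hden.le)
          (div_le_div₀ (by norm_num) (by linarith) hden le_rfl) hσ0.le
      have b2 : (2 / (y ^ 2 - 1) : ℝ) ^ σ = 2 ^ σ * (y ^ 2 - 1) ^ (-σ) := by
        rw [Real.div_rpow (by norm_num) (le_of_lt hden), Real.rpow_neg (le_of_lt hden),
          div_eq_mul_inv]
      linarith [b1, b2.le]
    have hB : |g y| / (1 + y - x₁) ≤ y ^ (α - 1) := by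
      have hgy : |g y| ≤ y ^ α := by
        have := hg y
        rwa [abs_of_pos hy0] at this
      have e : y ^ (α - 1) = y ^ α / y := by
        rw [Real.rpow_sub hy0, Real.rpow_one]
      rw [e]
      exact div_le_div₀ (Real.rpow_nonneg (le_of_lt hy0) _) hgy hy0 (by linarith)
    calc ((2 - x₁) / (y ^ 2 - 1)) ^ σ * (|g y| / (1 + y - x₁))
        ≤ (2 ^ σ * (y ^ 2 - 1) ^ (-σ)) * y ^ (α - 1) := by
          apply mul_le_mul hA hB (div_nonneg (abs_nonneg _) hd2.le) (by positivity)
      _ = 2 ^ σ * ((y ^ 2 - 1) ^ (-σ) * y ^ (α - 1)) := by ring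
  have hmeasf : ∀ x₁ : ℝ, Measurable
      (fun y : ℝ => ((2 - x₁) / (y ^ 2 - 1)) ^ σ * (g y / (1 + y - x₁))) := by
    intro x₁; fun_prop
  have hbound : IntegrableOn (fun y : ℝ => 2 ^ σ * ((y ^ 2 - 1) ^ (-σ) * y ^ (α - 1)))
      (Set.Ioi (1:ℝ)) := (aux_int hσ0 hσ1 hα0 hα2).const_mul _
  have part1 : ∀ x₁ ∈ Set.Ico (0:ℝ) 1,
      IntegrableOn
        (fun y : ℝ => ((2 - x₁) / (y ^ 2 - 1)) ^ σ * (g y / (1 + y - x₁)))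
        (Set.Ioi 1) := by
    intro x₁ hx
    refine Integrable.mono' hbound ((hmeasf x₁).aestronglyMeasurable.restrict) ?_
    rw [ae_restrict_iff' measurableSet_Ioi]
    filter_upwards with y hy
    exact key x₁ hx y hy
  refine ⟨part1, ?_, ?_⟩
  · rintro x₁ ⟨hx0, hx1⟩
    have hcongr : ∀ y ∈ Set.Ioi (1:ℝ),
        ((1 - |x₁ - 1| ^ 2) / (y ^ 2 - 1)) ^ σ * (g y / |x₁ - 1 - y|)
          = x₁ ^ σ * (((2 - x₁) / (y ^ 2 - 1)) ^ σ * (g y / (1 + y - x₁))) := by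
      intro y hy
      have hy1 : 1 < y := hy
      have hden : 0 < y ^ 2 - 1 := by nlinarith
      have h1 : |x₁ - 1| = 1 - x₁ := by
        rw [abs_of_neg (by linarith)]; ring
      have h2 : 1 - |x₁ - 1| ^ 2 = x₁ * (2 - x₁) := by rw [h1]; ring
      have h3 : |x₁ - 1 - y| = 1 + y - x₁ := by
        rw [abs_of_neg (by linarith)]; ring
      rw [h2, h3]
      have h4 : x₁ * (2 - x₁) / (y ^ 2 - 1) = x₁ * ((2 - x₁) / (y ^ 2 - 1)) := by ring
      rw [h4, Real.mul_rpow (le_of_lt hx0) (div_nonneg (by linarith) hden.le)]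
      ring
    rw [setIntegral_congr_fun measurableSet_Ioi hcongr, integral_const_mul]
    ring
  · rintro b ⟨hb0, hb1⟩
    refine ⟨|c| * ∫ y in Set.Ioi (1:ℝ), 2 ^ σ * ((y ^ 2 - 1) ^ (-σ) * y ^ (α - 1)), ?_⟩
    rintro x₁ ⟨hx0, hxb⟩
    have hx : x₁ ∈ Set.Ico (0:ℝ) 1 := ⟨hx0, by linarith⟩
    have hint := part1 x₁ hx
    rw [abs_mul]
    apply mul_le_mul_of_nonneg_left _ (abs_nonneg c)
    calc |∫ y in Set.Ioi (1:ℝ), ((2 - x₁) / (y ^ 2 - 1)) ^ σ * (g y / (1 + y - x₁))|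
        ≤ ∫ y in Set.Ioi (1:ℝ), |((2 - x₁) / (y ^ 2 - 1)) ^ σ * (g y / (1 + y - x₁))| := by
          exact
            norm_integral_le_integral_norm
              (fun y : ℝ => ((2 - x₁) / (y ^ 2 - 1)) ^ σ * (g y / (1 + y - x₁)))
              (μ := volume.restrict (Set.Ioi 1))
      _ ≤ ∫ y in Set.Ioi (1:ℝ), 2 ^ σ * ((y ^ 2 - 1) ^ (-σ) * y ^ (α - 1)) :=
          setIntegral_mono_on hint.abs hbound measurableSet_Ioi (key x₁ hx)
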